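/- (Summation formula) For every positive integer n with ab ≠ 1, (1 − ab)·∑_{k=0}^{n−1} J_k = J_n·(1 − a^{ξ(n)} b^{1−ξ(n)}) + 2·J_{n−1}·(1 − a^{1−ξ(n)} b^{ξ(n)}) + J_1·(a − 1) + J_0·(2b − ab − 1), where ξ(n) = 0 if n is even and ξ(n) = 1 if n is odd. -/
import Mathlib


noncomputable def JM (a b : ℝ) : ℕ → Matrix (Fin 2) (Fin 2) ℝ
  | 0 => 1
  | 1 => !![b, 2 * b / a; 1, 0]
  | n + 2 => (if Even (n + 2) then a else b) • JM a b (n + 1) + (2 : ℝ) • JM a b n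

theorem stmt10 (a b : ℝ) (ha : a ≠ 0) (hb : b ≠ 0) (hab : a * b ≠ 1)
    (n : ℕ) (hn : 1 ≤ n) :
    (1 - a * b) • ∑ k ∈ Finset.range n, JM a b k
      = (1 - (if Even n then b else a)) • JM a b n
        + (2 * (1 - (if Even n then a else b))) • JM a b (n - 1)
        + (a - 1) • JM a b 1 + (2 * b - a * b - 1) • JM a b 0 := by
  induction n, hn using Nat.le_induction with
  | base =>
    simp only [Finset.sum_range_one, Nat.not_even_one, if_false]
    norm_num
    module
  | succ n hn ih =>
    obtain ⟨m, rfl⟩ : ∃ m, n = m + 1 := ⟨n - 1, by omega⟩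
    have hrec : JM a b (m + 2) =
        (if Even (m + 2) then a else b) • JM a b (m + 1) + (2 : ℝ) • JM a b m := rfl
    rw [Finset.sum_range_succ, smul_add, ih, hrec]
    simp only [Nat.add_sub_cancel]
    rcases Nat.even_or_odd m with he | ho
    · simp only [Nat.even_add_one, he, not_true, if_false, if_true, not_false_iff,
        (by simp [Nat.even_add, he] : Even (m + 2)), (by simp : ¬ Even 1)]
      module
    · simp only [Nat.even_add_one, Nat.not_even_iff_odd.mpr ho, not_false_iff, if_true,
        if_false, (by simp [Nat.even_add, Nat.not_even_iff_odd.mpr ho] : ¬ Even (m + 2))]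
      module
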